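/- (Deterministic rejection implication, Eq. (A.4) in the proof of Theorem 5 of the paper.) Fix an integer n ≥ 1, reals q ≥ 0 and ε > 0, fixed vectors X_1, …, X_n ∈ ℝ^K, b ∈ ℝ^K, finite nonempty sets 𝒱_u, 𝒱_l ⊆ ℝ^K, a point v ∈ 𝒱_u, and data y_1, …, y_n ∈ {0,1}. Let W_i = (2y_i − 1)·1{X_i b ≥ 0 and X_i v < 0} for each i, and let T_n(b) be the test statistic computed from (y_1, …, y_n). If √n·(n^{-1} Σ_i W_i) < −q·max{ε, √((n^{-1} Σ_i W_i²)/(1 + q²/n))}, then T_n(b) > q. -/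

import Mathlib

/-- Sample upper moment `m̂_u(b,v)` computed from outcomes `y`. -/
noncomputable def muHatU {n K : ℕ} (X : Fin n → Fin K → ℝ) (b v : Fin K → ℝ)
    (y : Fin n → ℝ) : ℝ :=
  (n : ℝ)⁻¹ * ∑ i, (2 * y i - 1) *
    (if 0 ≤ (∑ j, X i j * b j) ∧ (∑ j, X i j * v j) < 0 then 1 else 0)

/-- Sample lower moment `m̂_l(b,v)` computed from outcomes `y`. -/
noncomputable def muHatL {n K : ℕ} (X : Fin n → Fin K → ℝ) (b v : Fin K → ℝ)
    (y : Fin n → ℝ) : ℝ :=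
  (n : ℝ)⁻¹ * ∑ i, (1 - 2 * y i) *
    (if (∑ j, X i j * b j) ≤ 0 ∧ 0 < (∑ j, X i j * v j) then 1 else 0)

/-- Sample variance `σ̂_u²(b,v)`. -/
noncomputable def sigHatU2 {n K : ℕ} (X : Fin n → Fin K → ℝ) (b v : Fin K → ℝ)
    (y : Fin n → ℝ) : ℝ :=
  (n : ℝ)⁻¹ * (∑ i, (if 0 ≤ (∑ j, X i j * b j) ∧ (∑ j, X i j * v j) < 0
      then (1:ℝ) else 0)) - (muHatU X b v y) ^ 2

/-- Sample variance `σ̂_l²(b,v)`. -/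
noncomputable def sigHatL2 {n K : ℕ} (X : Fin n → Fin K → ℝ) (b v : Fin K → ℝ)
    (y : Fin n → ℝ) : ℝ :=
  (n : ℝ)⁻¹ * (∑ i, (if (∑ j, X i j * b j) ≤ 0 ∧ 0 < (∑ j, X i j * v j)
      then (1:ℝ) else 0)) - (muHatL X b v y) ^ 2

/-- The test statistic `T_n(b)` computed from outcomes `y`. -/
noncomputable def Tstat {n K : ℕ} (X : Fin n → Fin K → ℝ)
    (Vu Vl : Finset (Fin K → ℝ)) (hu : Vu.Nonempty) (hl : Vl.Nonempty)
    (ε : ℝ) (b : Fin K → ℝ) (y : Fin n → ℝ) : ℝ :=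
  max 0 (max
    (Vu.sup' hu fun v =>
      Real.sqrt n * (-(muHatU X b v y)) /
        max (Real.sqrt (sigHatU2 X b v y)) ε)
    (Vl.sup' hl fun v =>
      Real.sqrt n * (-(muHatL X b v y)) /
        max (Real.sqrt (sigHatL2 X b v y)) ε))

/-- Eq. (A.4) in the proof of Theorem 5: if the standardized sample moment at some
`v ∈ 𝒱_u` is sufficiently negative, then `T_n(b) > q`. -/
theorem rejection_implication
    {n K : ℕ} (hn : 1 ≤ n)
    (q ε : ℝ) (hq : 0 ≤ q) (hε : 0 < ε)
    (X : Fin n → Fin K → ℝ) (b : Fin K → ℝ)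
    (Vu Vl : Finset (Fin K → ℝ)) (hu : Vu.Nonempty) (hl : Vl.Nonempty)
    (v : Fin K → ℝ) (hv : v ∈ Vu)
    (y : Fin n → ℝ) (hy : ∀ i, y i = 0 ∨ y i = 1)
    (W : Fin n → ℝ)
    (hW : ∀ i, W i = (2 * y i - 1) *
      (if 0 ≤ (∑ j, X i j * b j) ∧ (∑ j, X i j * v j) < 0 then 1 else 0))
    (hviol : Real.sqrt n * ((n : ℝ)⁻¹ * ∑ i, W i) <
      -q * max ε (Real.sqrt (((n : ℝ)⁻¹ * ∑ i, (W i) ^ 2) / (1 + q ^ 2 / n)))) :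
    q < Tstat X Vu Vl hu hl ε b y := by

  have hn0 : (0:ℝ) < n := by exact_mod_cast Nat.lt_of_lt_of_le Nat.zero_lt_one hn
  have hm : muHatU X b v y = (n:ℝ)⁻¹ * ∑ i, W i := by
    unfold muHatU
    congr 1
    exact Finset.sum_congr rfl fun i _ => (hW i).symm
  set m := muHatU X b v y with hm_def
  set s := (n:ℝ)⁻¹ * (∑ i, (if 0 ≤ (∑ j, X i j * b j) ∧ (∑ j, X i j * v j) < 0
      then (1:ℝ) else 0)) with hs_def
  have hWsq : ∀ i, (W i)^2 = (if 0 ≤ (∑ j, X i j * b j) ∧ (∑ j, X i j * v j) < 0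
      then (1:ℝ) else 0) := by
    intro i
    rw [hW i, mul_pow]
    rcases hy i with h | h <;> split <;> simp [h] <;> ring
  have hsum : (n:ℝ)⁻¹ * ∑ i, (W i)^2 = s := by
    rw [hs_def]; congr 1; exact Finset.sum_congr rfl fun i _ => hWsq i
  have hsig : sigHatU2 X b v y = s - m^2 := rfl
  have hs_nonneg : 0 ≤ s := by
    apply mul_nonneg (inv_nonneg.2 hn0.le)
    apply Finset.sum_nonneg
    intro i _
    split <;> norm_num
  set D : ℝ := 1 + q^2 / n with hD_def
  have hD : (0:ℝ) < D := by positivity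
  rw [hsum] at hviol
  rw [← hm] at hviol
  set A : ℝ := Real.sqrt n * (-m) with hA_def
  have hA : q * max ε (Real.sqrt (s / D)) < A := by
    rw [hA_def]; nlinarith [hviol]
  have hsqD : (Real.sqrt (s / D))^2 = s / D := Real.sq_sqrt (by positivity)
  have hA2 : A^2 = n * m^2 := by
    rw [hA_def, mul_pow, Real.sq_sqrt hn0.le]; ring
  have hineq : sigHatU2 X b v y ≤ s / D := by
    rw [hsig]
    rcases eq_or_lt_of_le hq with hq0 | hq0
    · rw [hD_def, ← hq0]
      simp
      nlinarith [sq_nonneg m]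
    · have h1 : q * Real.sqrt (s / D) < A :=
        lt_of_le_of_lt (mul_le_mul_of_nonneg_left (le_max_right _ _) hq) hA
      have h2 : q^2 * (s / D) < A^2 := by
        have := pow_lt_pow_left₀ h1 (by positivity) (n := 2) two_ne_zero
        calc q^2 * (s / D) = (q * Real.sqrt (s / D))^2 := by rw [mul_pow, hsqD]
          _ < A^2 := this
      rw [hA2] at h2
      have h3 : q^2 * s < (n:ℝ) * m^2 * D := by
        calc q^2 * s = q^2 * (s / D) * D := by field_simp
          _ < (n:ℝ) * m^2 * D := mul_lt_mul_of_pos_right h2 hD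
      rw [le_div_iff₀ hD]
      have hDn : D * n = n + q^2 := by rw [hD_def]; field_simp
      have h5 : (s - m^2) * D * n < s * n := by nlinarith [h3, hDn]
      exact le_of_lt ((mul_lt_mul_iff_of_pos_right hn0).mp h5)
  have hMle : max (Real.sqrt (sigHatU2 X b v y)) ε ≤ max ε (Real.sqrt (s / D)) := by
    rw [max_comm ε]
    exact max_le_max (Real.sqrt_le_sqrt hineq) le_rfl
  have hMpos : 0 < max (Real.sqrt (sigHatU2 X b v y)) ε :=
    lt_of_lt_of_le hε (le_max_right _ _)
  have hkey : q < Real.sqrt n * (-m) / max (Real.sqrt (sigHatU2 X b v y)) ε := by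
    rw [lt_div_iff₀ hMpos]
    calc q * max (Real.sqrt (sigHatU2 X b v y)) ε
        ≤ q * max ε (Real.sqrt (s / D)) := mul_le_mul_of_nonneg_left hMle hq
      _ < A := hA
  refine lt_of_lt_of_le hkey ?_
  rw [hm_def]
  refine le_trans (Finset.le_sup' (f := fun v => Real.sqrt n * (-(muHatU X b v y)) /
      max (Real.sqrt (sigHatU2 X b v y)) ε) hv) ?_
  exact le_trans (le_max_left _ _) (le_max_right _ _)
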